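/- Let c ≥ 1 and let G be a group of nilpotency class at most c (Γ_{c+1} = 1 for the lower central series Γ₁ = G, Γ_{i+1} = [Γᵢ, G]). Let A ⊆ G be a subset generating G, and let R ⊆ G. Then the normal closure of R in G equals the subgroup of G generated by the set of all iterated commutators [⋯[[r, x₁], x₂], ⋯, x_j] with r ∈ R, 0 ≤ j ≤ c, and x₁,…,x_j ∈ A ∪ A⁻¹, where [x,y] = x⁻¹y⁻¹xy (the case j = 0 giving the elements of R themselves). -/

import Mathlib

/-- The commutator with the paper's convention `[x,y] = x⁻¹ y⁻¹ x y`. -/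
def pcomm {G : Type*} [Group G] (x y : G) : G := x⁻¹ * y⁻¹ * x * y

open scoped commutatorElement

lemma pcomm_eq_commutator {G : Type*} [Group G] (x y : G) :
    pcomm x y = ⁅x⁻¹, y⁻¹⁆ := by
  simp [pcomm, commutatorElement_def]

lemma foldl_pcomm_mem_lcs {G : Type*} [Group G] (l : List G) (r : G) (k : ℕ)
    (hr : r ∈ (⊤ : Subgroup G).lowerCentralSeries k) :
    l.foldl pcomm r ∈ (⊤ : Subgroup G).lowerCentralSeries (k + l.length) := by
  induction l generalizing r k with
  | nil => simpa using hr
  | cons x l ih =>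
    have h1 : pcomm r x ∈ (⊤ : Subgroup G).lowerCentralSeries (k + 1) := by
      rw [pcomm_eq_commutator, Subgroup.lowerCentralSeries_succ]
      exact Subgroup.commutator_mem_commutator (inv_mem hr) (Subgroup.mem_top _)
    have := ih (pcomm r x) (k + 1) h1
    simpa [List.foldl_cons, Nat.add_assoc, Nat.add_comm 1 l.length] using this

lemma foldl_pcomm_mem_normal {G : Type*} [Group G] (N : Subgroup G) [N.Normal]
    (l : List G) (r : G) (hr : r ∈ N) : l.foldl pcomm r ∈ N := by
  induction l generalizing r with
  | nil => exact hr
  | cons x l ih =>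
    refine ih _ ?_
    have : pcomm r x = r⁻¹ * (x⁻¹ * r * x) := by simp [pcomm]; group
    rw [this]
    exact mul_mem (inv_mem hr) (by simpa using ‹N.Normal›.conj_mem r hr x⁻¹)

/-- **Generating the normal closure (inside Proposition 8.1):** in a group of
nilpotency class at most `c` generated by `A`, the normal closure of a set `R`
is generated by the iterated commutators `[⋯[[r,x₁],x₂],⋯,x_j]` with `r ∈ R`,
`0 ≤ j ≤ c` and `x₁, …, x_j ∈ A ∪ A⁻¹`. -/
theorem normalClosure_eq_closure_iterated_commutators (G : Type*) [Group G]
    (c : ℕ) (hc : 1 ≤ c) (hG : (⊤ : Subgroup G).lowerCentralSeries c = ⊥)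
    (A R : Set G) (hA : Subgroup.closure A = ⊤) :
    Subgroup.normalClosure R =
      Subgroup.closure {w : G | ∃ r ∈ R, ∃ l : List G,
        l.length ≤ c ∧ (∀ x ∈ l, x ∈ A ∨ x⁻¹ ∈ A) ∧ w = l.foldl pcomm r} := by
  set S : Set G := {w : G | ∃ r ∈ R, ∃ l : List G,
      l.length ≤ c ∧ (∀ x ∈ l, x ∈ A ∨ x⁻¹ ∈ A) ∧ w = l.foldl pcomm r} with hS
  set H : Subgroup G := Subgroup.closure S with hH
  -- key conjugation fact
  have key : ∀ g : G, (g ∈ A ∨ g⁻¹ ∈ A) → ∀ h ∈ H, g * h * g⁻¹ ∈ H := by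
    intro g hg h hh
    induction hh using Subgroup.closure_induction with
    | mem s hs =>
      obtain ⟨r, hr, l, hlen, hmem, rfl⟩ := hs
      rcases lt_or_eq_of_le hlen with hlt | heq
      · have hsH : l.foldl pcomm r ∈ H := Subgroup.subset_closure ⟨r, hr, l, hlen, hmem, rfl⟩
        have hnew : (l ++ [g⁻¹]).foldl pcomm r ∈ H := by
          refine Subgroup.subset_closure ⟨r, hr, l ++ [g⁻¹], ?_, ?_, rfl⟩
          · simpa using hlt
          · intro x hx
            rcases List.mem_append.mp hx with hx | hx
            · exact hmem x hx
            · simp only [List.mem_singleton] at hx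
              subst hx
              rcases hg with hg | hg
              · exact Or.inr (by simpa using hg)
              · exact Or.inl hg
        have heq2 : g * (l.foldl pcomm r) * g⁻¹
            = l.foldl pcomm r * (l ++ [g⁻¹]).foldl pcomm r := by
          rw [List.foldl_append]
          simp [pcomm]
          group
        rw [heq2]
        exact mul_mem hsH hnew
      · have : l.foldl pcomm r ∈ (⊤ : Subgroup G).lowerCentralSeries c := by
          have := foldl_pcomm_mem_lcs l r 0 (Subgroup.mem_top r)
          simpa [heq] using this
        rw [hG, Subgroup.mem_bot] at this
        rw [this]; simpa using one_mem H
    | one => simpa using one_mem H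
    | mul a b _ _ ha hb =>
      have : g * (a * b) * g⁻¹ = (g * a * g⁻¹) * (g * b * g⁻¹) := by group
      rw [this]; exact mul_mem ha hb
    | inv a _ ha =>
      have : g * a⁻¹ * g⁻¹ = (g * a * g⁻¹)⁻¹ := by group
      rw [this]; exact inv_mem ha
  have hNormal : H.Normal := by
    rw [← Subgroup.normalizer_eq_top_iff]
    rw [eq_top_iff, ← hA, Subgroup.closure_le]
    intro a haA
    rw [SetLike.mem_coe, Subgroup.mem_normalizer_iff]
    intro h
    constructor
    · exact fun hh => key a (Or.inl haA) h hh
    · intro hh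
      have := key a⁻¹ (Or.inr (by simpa using haA)) _ hh
      simpa [mul_assoc] using this
  apply le_antisymm
  · have : R ⊆ (H : Set G) := by
      intro r hr
      exact Subgroup.subset_closure ⟨r, hr, [], by simp, by simp, rfl⟩
    exact Subgroup.normalClosure_le_normal this
  · rw [Subgroup.closure_le]
    rintro w ⟨r, hr, l, _, _, rfl⟩
    exact foldl_pcomm_mem_normal _ l r (Subgroup.subset_normalClosure hr)
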